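/- The discriminant of the trinomial x^n + c x^{n-1} + d equals (-1)^{n(n-1)/2} d^{n-2} (n^n d + (1-n)^{n-1} c^n). -/

import Mathlib

open Polynomial Finset

private lemma derivative_finset_prod' {R : Type*} [CommRing R] {ι : Type*} [DecidableEq ι]
    (s : Finset ι) (f : ι → R[X]) :
    derivative (∏ i ∈ s, f i) = ∑ i ∈ s, (∏ j ∈ s.erase i, f j) * derivative (f i) := by
  induction s using Finset.induction_on with
  | empty => simp
  | @insert a s ha ih =>
    have hs : ∀ i ∈ s, (∏ j ∈ (insert a s).erase i, f j) * derivative (f i)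
        = f a * ((∏ j ∈ s.erase i, f j) * derivative (f i)) := by
      intro i hi
      rw [Finset.erase_insert_of_ne (by rintro rfl; exact ha hi),
        Finset.prod_insert (fun hmem => ha (Finset.mem_of_mem_erase hmem)), mul_assoc]
    rw [Finset.prod_insert ha, derivative_mul, ih, Finset.sum_insert ha,
      Finset.erase_insert ha, Finset.sum_congr rfl hs, ← Finset.mul_sum]
    ring

private lemma offdiag_prod {n : ℕ} (f : Fin n → Fin n → ℂ) :
    ∏ q ∈ Finset.univ.offDiag, f q.1 q.2 = ∏ i, ∏ j ∈ Finset.univ.erase i, f i j := by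
  rw [show (Finset.univ : Finset (Fin n)).offDiag =
      (Finset.univ ×ˢ Finset.univ).filter (fun a : Fin n × Fin n => a.1 ≠ a.2) from by
      ext; simp, Finset.prod_filter,
    Finset.prod_product (f := fun q : Fin n × Fin n => if q.1 ≠ q.2 then f q.1 q.2 else 1)]
  refine Finset.prod_congr rfl fun i _ => ?_
  rw [← Finset.prod_filter, Finset.filter_ne]

private lemma card_swap' {n : ℕ} :
    (Finset.univ.filter (fun q : Fin n × Fin n => q.1 < q.2)).card
      = (Finset.univ.filter (fun q : Fin n × Fin n => q.2 < q.1)).card := by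
  apply Finset.card_bij' (fun q _ => q.swap) (fun q _ => q.swap) <;> simp

private lemma union_lt_gt {n : ℕ} :
    (Finset.univ : Finset (Fin n)).offDiag =
      (Finset.univ.filter (fun q : Fin n × Fin n => q.1 < q.2)) ∪
      (Finset.univ.filter (fun q : Fin n × Fin n => q.2 < q.1)) := by
  ext q
  simp only [Finset.mem_offDiag, Finset.mem_union, Finset.mem_filter, Finset.mem_univ, true_and]
  exact ⟨fun h => lt_or_gt_of_ne h, fun h => h.elim ne_of_lt (fun h' => (ne_of_lt h').symm)⟩

private lemma disj_lt_gt {n : ℕ} :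
    Disjoint (Finset.univ.filter (fun q : Fin n × Fin n => q.1 < q.2))
      (Finset.univ.filter (fun q : Fin n × Fin n => q.2 < q.1)) := by
  rw [Finset.disjoint_left]
  intro q hq hq'
  simp only [Finset.mem_filter] at hq hq'
  exact absurd hq'.2 (lt_asymm hq.2)

private lemma card_lt' {n : ℕ} :
    (Finset.univ.filter (fun q : Fin n × Fin n => q.1 < q.2)).card = n * (n-1) / 2 := by
  have h1 := Finset.card_union_of_disjoint (disj_lt_gt (n := n))
  rw [← union_lt_gt, Finset.offDiag_card, ← card_swap'] at h1
  simp only [Finset.card_univ, Fintype.card_fin] at h1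
  have h2 : n * (n - 1) = n * n - n := by cases n with
    | zero => simp
    | succ k => simp [Nat.mul_sub, Nat.mul_succ, Nat.succ_mul]
  omega

private lemma split_prod {n : ℕ} (θ : Fin n → ℂ) :
    ∏ q ∈ (Finset.univ : Finset (Fin n)).offDiag, (θ q.1 - θ q.2) =
      (-1) ^ (n * (n-1) / 2) *
        ∏ q ∈ Finset.univ.filter (fun q : Fin n × Fin n => q.1 < q.2), (θ q.1 - θ q.2) ^ 2 := by
  rw [union_lt_gt, Finset.prod_union disj_lt_gt]
  have h2 : ∏ q ∈ Finset.univ.filter (fun q : Fin n × Fin n => q.2 < q.1), (θ q.1 - θ q.2)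
      = ∏ q ∈ Finset.univ.filter (fun q : Fin n × Fin n => q.1 < q.2), (θ q.2 - θ q.1) := by
    apply Finset.prod_bij' (fun q _ => q.swap) (fun q _ => q.swap) <;> simp
  rw [h2, ← Finset.prod_mul_distrib]
  have h3 : ∀ q ∈ Finset.univ.filter (fun q : Fin n × Fin n => q.1 < q.2),
      (θ q.1 - θ q.2) * (θ q.2 - θ q.1) = (-1) * (θ q.1 - θ q.2)^2 := by
    intro q _; ring
  rw [Finset.prod_congr rfl h3, Finset.prod_mul_distrib, Finset.prod_const, card_lt']

theorem stmt1 (n : ℕ) (hn : 2 ≤ n) (c d : ℤ) (θ : Fin n → ℂ)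
    (h : (X ^ n + C (c : ℂ) * X ^ (n - 1) + C (d : ℂ) : ℂ[X]) = ∏ i, (X - C (θ i))) :
    ∏ q ∈ Finset.univ.filter (fun q : Fin n × Fin n => q.1 < q.2), (θ q.1 - θ q.2) ^ 2 =
      (-1) ^ (n * (n - 1) / 2) * (d : ℂ) ^ (n - 2) *
        ((n : ℂ) ^ n * (d : ℂ) + ((1 : ℂ) - n) ^ (n - 1) * (c : ℂ) ^ n) := by
  obtain ⟨m, rfl⟩ : ∃ m, n = m + 2 := ⟨n - 2, by omega⟩
  have hm : (m + 2 : ℕ) - 1 = m + 1 := rfl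
  have hm2 : (m + 2 : ℕ) - 2 = m := rfl
  have hN : ((m:ℂ) + 2) ≠ 0 := by
    have h0 : ((m+2 : ℕ) : ℂ) ≠ 0 := Nat.cast_ne_zero.mpr (by omega)
    push_cast at h0
    exact h0
  rw [hm] at h
  rw [hm, hm2]
  push_cast
  -- evaluation identity
  have heval : ∀ z : ℂ, z ^ (m+2) + c * z ^ (m+1) + d = ∏ i, (z - θ i) := by
    intro z
    have := congrArg (eval z) h
    simpa [eval_prod] using this
  -- derivative identity
  have hder : ∀ k : Fin (m+2),
      ((m:ℂ)+2) * θ k ^ (m+1) + c * ((m:ℂ)+1) * θ k ^ m = ∏ j ∈ univ.erase k, (θ k - θ j) := by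
    intro k
    have h1 := congrArg (fun p => eval (θ k) (derivative p)) h
    simp only [derivative_add, derivative_C, derivative_X_pow, derivative_mul, derivative_C_mul,
      eval_add, eval_mul, eval_pow, eval_X, eval_natCast, eval_C, add_zero] at h1
    rw [derivative_finset_prod'] at h1
    simp only [derivative_X_sub_C, mul_one, eval_finset_sum, eval_prod, eval_sub, eval_X,
      eval_C, eval_zero, zero_mul, zero_add] at h1
    rw [Finset.sum_eq_single_of_mem k (Finset.mem_univ k)
      (fun i _ hik => Finset.prod_eq_zero (Finset.mem_erase.2 ⟨hik.symm, Finset.mem_univ k⟩)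
        (sub_self (θ k)))] at h1
    push_cast at h1
    linear_combination h1
  -- product of the roots
  have hprodθ : ∏ i, θ i = (-1:ℂ)^(m+2) * d := by
    have h0 := heval 0
    rw [zero_pow (by omega), zero_pow (by omega)] at h0
    simp only [mul_zero, zero_add] at h0
    have h1 : ∏ i, ((0:ℂ) - θ i) = (-1:ℂ)^(m+2) * ∏ i, θ i := by
      rw [show (fun i => (0:ℂ) - θ i) = fun i => (-1) * θ i from funext fun i => by ring]
      rw [Finset.prod_mul_distrib, Finset.prod_const, Finset.card_univ, Fintype.card_fin]
    rw [h1] at h0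
    have hsq : (-1:ℂ)^(m+2) * (-1:ℂ)^(m+2) = 1 := by
      rw [← pow_add]; exact Even.neg_one_pow ⟨m+2, by ring⟩
    calc ∏ i, θ i = ((-1:ℂ)^(m+2) * (-1:ℂ)^(m+2)) * ∏ i, θ i := by rw [hsq, one_mul]
    _ = (-1:ℂ)^(m+2) * d := by rw [mul_assoc, ← h0]
  -- the linear-factor product
  set a : ℂ := -(c*((m:ℂ)+1))/((m:ℂ)+2) with ha_def
  have ha : -((m:ℂ)+2) * a = c * ((m:ℂ)+1) := by
    rw [ha_def]; field_simp
  have hproda : ∏ i, (((m:ℂ)+2) * θ i + c*((m:ℂ)+1))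
      = (-((m:ℂ)+2))^(m+2) * (a^(m+2) + c*a^(m+1) + d) := by
    have e : ∀ i ∈ (univ : Finset (Fin (m+2))),
        ((m:ℂ)+2) * θ i + c*((m:ℂ)+1) = (-((m:ℂ)+2)) * (a - θ i) := by
      intro i _
      rw [mul_sub, ha]
      ring
    rw [Finset.prod_congr rfl e, Finset.prod_mul_distrib, Finset.prod_const, Finset.card_univ,
      Fintype.card_fin, ← heval a]
  -- value computation
  have hval : (-((m:ℂ)+2))^(m+2) * (a^(m+2) + c*a^(m+1) + d)
      = (-1:ℂ)^m * ((m:ℂ)+2)^(m+2) * d - ((m:ℂ)+1)^(m+1) * c^(m+2) := by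
    have e1 : (-((m:ℂ)+2))^(m+2) * a^(m+2) = (c:ℂ)^(m+2) * ((m:ℂ)+1)^(m+2) := by
      rw [← mul_pow, ha, mul_pow]
    have e2 : (-((m:ℂ)+2))^(m+2) * a^(m+1) = -((m:ℂ)+2) * ((c:ℂ)^(m+1) * ((m:ℂ)+1)^(m+1)) := by
      rw [show m+2 = (m+1)+1 from rfl, pow_succ ((-((m:ℂ)+2))) (m+1), mul_comm _ (-((m:ℂ)+2)),
        mul_assoc, ← mul_pow, ha, mul_pow]
    have e3 : (-((m:ℂ)+2))^(m+2) = (-1:ℂ)^m * ((m:ℂ)+2)^(m+2) := by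
      rw [neg_pow]
      congr 1
      rw [pow_succ, pow_succ]
      ring
    linear_combination e1 + c * e2 + d * e3
  -- assemble the off-diagonal product
  have main : ∏ q ∈ (univ : Finset (Fin (m+2))).offDiag, (θ q.1 - θ q.2)
      = ((-1:ℂ)^(m+2) * d)^m *
          ((-1:ℂ)^m * ((m:ℂ)+2)^(m+2) * d - ((m:ℂ)+1)^(m+1) * c^(m+2)) := by
    rw [offdiag_prod (fun i j => θ i - θ j)]
    have e : ∀ k ∈ (univ : Finset (Fin (m+2))), ∏ j ∈ univ.erase k, (θ k - θ j)
        = θ k ^ m * (((m:ℂ)+2) * θ k + c*((m:ℂ)+1)) := by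
      intro k _
      rw [← hder k]
      ring
    rw [Finset.prod_congr rfl e, Finset.prod_mul_distrib, Finset.prod_pow, hproda, hval, hprodθ]
  -- final sign bookkeeping
  have hs := split_prod (n := m+2) θ
  rw [hm] at hs
  rw [main] at hs
  have hsq : ((-1:ℂ))^((m+2) * (m+1) / 2) * ((-1:ℂ))^((m+2) * (m+1) / 2) = 1 := by
    rw [← pow_add]; exact Even.neg_one_pow ⟨_, rfl⟩
  have goal2 : ∏ q ∈ Finset.univ.filter (fun q : Fin (m+2) × Fin (m+2) => q.1 < q.2),
      (θ q.1 - θ q.2) ^ 2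
      = (-1:ℂ)^((m+2) * (m+1) / 2) * (((-1:ℂ)^(m+2) * d)^m *
          ((-1:ℂ)^m * ((m:ℂ)+2)^(m+2) * d - ((m:ℂ)+1)^(m+1) * c^(m+2))) := by
    calc ∏ q ∈ Finset.univ.filter (fun q : Fin (m+2) × Fin (m+2) => q.1 < q.2),
        (θ q.1 - θ q.2) ^ 2
        = (((-1:ℂ))^((m+2) * (m+1) / 2) * ((-1:ℂ))^((m+2) * (m+1) / 2)) *
          ∏ q ∈ Finset.univ.filter (fun q : Fin (m+2) × Fin (m+2) => q.1 < q.2),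
            (θ q.1 - θ q.2) ^ 2 := by rw [hsq, one_mul]
      _ = _ := by rw [mul_assoc, ← hs]
  rw [goal2]
  -- now pure algebra
  have hee : ((-1:ℂ)^(m+2))^m = (-1:ℂ)^m := by
    rw [← pow_mul]
    rcases Nat.even_or_odd m with he | ho
    · rw [Even.neg_one_pow (he.mul_left (m+2)), Even.neg_one_pow he]
    · rw [Odd.neg_one_pow ((ho.add_even (by norm_num)).mul ho), Odd.neg_one_pow ho]
  have h1m : ((1:ℂ) - ((m:ℂ)+2))^(m+1) = (-1:ℂ)^m * (-1) * ((m:ℂ)+1)^(m+1) := by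
    rw [show (1:ℂ) - ((m:ℂ)+2) = (-1) * ((m:ℂ)+1) from by ring, mul_pow, pow_succ]
  have hE : (-1:ℂ)^m * (-1:ℂ)^m = 1 := by
    rw [← pow_add]; exact Even.neg_one_pow ⟨m, rfl⟩
  rw [mul_pow, hee, h1m]
  linear_combination ((-1:ℂ)^((m+2)*(m+1)/2) * ((m:ℂ)+2)^(m+2) * (d:ℂ)^m * (d:ℂ)) * hE
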